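/- Let L ≥ 2 and K ≥ 1, and let ρ_ℓ^k > 0 for ℓ ∈ [L], k ∈ [K] satisfy the telescoping property ∏_{ℓ=1}^L ρ_ℓ^k = 1 for every k. Define the Carli index ρ̄_ℓ = (1/K) ∑_{k=1}^K ρ_ℓ^k. Then ∏_{ℓ=1}^L ρ̄_ℓ ≥ 1, with equality if and only if for each ℓ the values ρ_ℓ^k are constant in k. -/

import Mathlib

open Finset

/-- Carli mean inequality: if positive price ratios telescope around a cycle
(`∏ ℓ, ρ ℓ k = 1` for each good `k`), then the product over the cycle of the
Carli indices (unweighted means over goods) is at least 1, with equality iff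
on each edge the ratios are constant across goods. -/
theorem carli_mean_inequality (L K : ℕ) (hL : 2 ≤ L) (hK : 1 ≤ K)
    (ρ : Fin L → Fin K → ℝ) (hpos : ∀ ℓ k, 0 < ρ ℓ k)
    (htel : ∀ k, ∏ ℓ : Fin L, ρ ℓ k = 1) :
    1 ≤ ∏ ℓ : Fin L, ((1 : ℝ) / K) * ∑ k : Fin K, ρ ℓ k ∧
    ((∏ ℓ : Fin L, ((1 : ℝ) / K) * ∑ k : Fin K, ρ ℓ k) = 1 ↔
      ∀ ℓ, ∀ k k' : Fin K, ρ ℓ k = ρ ℓ k') := by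
  have hKpos : (0 : ℝ) < K := by positivity
  set f : Fin L → ℝ := fun ℓ => ((1 : ℝ) / K) * ∑ k : Fin K, ρ ℓ k with hf
  have hfpos : ∀ ℓ, 0 < f ℓ := by
    intro ℓ
    have : 0 < ∑ k : Fin K, ρ ℓ k := by
      apply Finset.sum_pos (fun k _ => hpos ℓ k)
      exact univ_nonempty_iff.2 (Fin.pos_iff_nonempty.mp hK)
    positivity
  -- weights
  have hw : ∑ _k : Fin K, (1 : ℝ) / K = 1 := by
    simp [Finset.sum_const, Finset.card_univ]
    field_simp
  have hfeq : ∀ ℓ, f ℓ = ∑ k : Fin K, ((1 : ℝ) / K) • ρ ℓ k := by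
    intro ℓ; simp [hf, Finset.mul_sum, smul_eq_mul]
  -- Jensen for log on each edge
  have hjensen : ∀ ℓ, ∑ k : Fin K, ((1 : ℝ) / K) • Real.log (ρ ℓ k) ≤ Real.log (f ℓ) := by
    intro ℓ
    have := strictConcaveOn_log_Ioi.concaveOn.le_map_sum
      (t := Finset.univ) (w := fun _ : Fin K => (1 : ℝ) / K) (p := fun k => ρ ℓ k)
      (fun k _ => by positivity) hw (fun k _ => hpos ℓ k)
    rw [hfeq ℓ]
    simpa using this
  -- total of inner sums is zero
  have htotal : ∑ ℓ : Fin L, ∑ k : Fin K, ((1 : ℝ) / K) • Real.log (ρ ℓ k) = 0 := by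
    rw [Finset.sum_comm]
    have : ∀ k : Fin K, ∑ ℓ : Fin L, ((1 : ℝ) / K) • Real.log (ρ ℓ k) = 0 := by
      intro k
      rw [← Finset.smul_sum, ← Real.log_prod (s := Finset.univ) (f := fun ℓ => ρ ℓ k) (fun ℓ _ => (hpos ℓ k).ne'), htel k,
        Real.log_one, smul_zero]
    simp only [smul_eq_mul, one_div] at this ⊢
    exact Finset.sum_eq_zero fun k _ => this k
  have hlogprod : Real.log (∏ ℓ : Fin L, f ℓ) = ∑ ℓ : Fin L, Real.log (f ℓ) :=
    Real.log_prod (s := Finset.univ) (f := f) (fun ℓ _ => (hfpos ℓ).ne')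
  have hsumle : 0 ≤ ∑ ℓ : Fin L, Real.log (f ℓ) := by
    rw [← htotal]
    exact Finset.sum_le_sum (fun ℓ _ => hjensen ℓ)
  have hprodpos : 0 < ∏ ℓ : Fin L, f ℓ := Finset.prod_pos (fun ℓ _ => hfpos ℓ)
  have hge : 1 ≤ ∏ ℓ : Fin L, f ℓ := by
    rw [← Real.log_nonneg_iff hprodpos, hlogprod]; exact hsumle
  refine ⟨hge, ?_, ?_⟩
  · -- equality → constant
    intro heq ℓ k k'
    have hsum0 : ∑ ℓ : Fin L, Real.log (f ℓ) = 0 := by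
      rw [← hlogprod, heq, Real.log_one]
    -- each Jensen inequality is equality
    have hterm : ∀ ℓ, Real.log (f ℓ) = ∑ k : Fin K, ((1 : ℝ) / K) • Real.log (ρ ℓ k) := by
      intro ℓ'
      have := Finset.sum_eq_zero_iff_of_nonneg
        (s := Finset.univ)
        (f := fun ℓ : Fin L => Real.log (f ℓ) - ∑ k : Fin K, ((1 : ℝ) / K) • Real.log (ρ ℓ k))
        (fun ℓ _ => by linarith [hjensen ℓ])
      have hz : ∑ ℓ : Fin L, (Real.log (f ℓ) - ∑ k : Fin K, ((1 : ℝ) / K) • Real.log (ρ ℓ k)) = 0 := by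
        rw [Finset.sum_sub_distrib, htotal, hsum0]; ring
      have := (this.mp hz) ℓ' (Finset.mem_univ _)
      linarith
    have hle : Real.log (∑ k : Fin K, ((1 : ℝ) / K) • ρ ℓ k)
        ≤ ∑ k : Fin K, ((1 : ℝ) / K) • Real.log (ρ ℓ k) := by
      rw [← hfeq ℓ, hterm ℓ]
    exact strictConcaveOn_log_Ioi.eq_of_map_sum_eq
      (t := Finset.univ) (w := fun _ : Fin K => (1 : ℝ) / K) (p := fun k => ρ ℓ k)
      (fun k _ => by positivity) hw (fun k _ => hpos ℓ k) hle
      (Finset.mem_univ k) (Finset.mem_univ k')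
  · -- constant → equality
    intro hconst
    have k0 : Fin K := ⟨0, hK⟩
    have hfval : ∀ ℓ, f ℓ = ρ ℓ k0 := by
      intro ℓ
      have : ∑ k : Fin K, ρ ℓ k = K * ρ ℓ k0 := by
        rw [Finset.sum_congr rfl (fun k _ => hconst ℓ k k0)]
        simp [Finset.sum_const, Finset.card_univ]
      rw [hf]; dsimp only; rw [this]; field_simp
    rw [Finset.prod_congr rfl (fun ℓ _ => hfval ℓ)]
    exact htel k0
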